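/- Let n≥2 be an integer and g a nonnegative integer with gcd(n,g)=1. Then det C_{n,g}(P) = det(Q_g) · [ (1 − P_{n+1})^{n−1} + P_n^{n−2} · Σ_{i=1}^{n−1} P_i · ((1 − P_{n+1})/P_n)^{i−1} ]. -/

import Mathlib

/-- The `g`-circulant matrix of size `n` with first row `(a 0, a 1, …, a (n-1))`:
its `(i,j)` entry (0-indexed) equals `a ((j - i*g) mod n)`. -/
def gCirc {α : Type*} (n g : ℕ) (a : ℕ → α) : Matrix (Fin n) (Fin n) α :=
  Matrix.of fun i j => a ((j.val + (n - (i.val * g) % n)) % n)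

/-- `Q_g`: the `g`-circulant matrix with first row `(1,0,…,0)`. -/
def Qg (n g : ℕ) : Matrix (Fin n) (Fin n) ℝ :=
  gCirc n g (fun m => if m = 0 then (1 : ℝ) else 0)

lemma gCirc_decomp (n g : ℕ) (hn : 0 < n) (a : ℕ → ℝ) :
    gCirc n g a = Qg n g * gCirc n 1 a := by
  ext i j
  rw [Matrix.mul_apply]
  have hm : (i.val * g) % n < n := Nat.mod_lt _ hn
  rw [Finset.sum_eq_single (⟨(i.val * g) % n, hm⟩ : Fin n)]
  · simp only [Qg, gCirc, Matrix.of_apply]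
    have h0 : ((i.val * g) % n + (n - (i.val * g) % n)) % n = 0 := by
      rw [Nat.add_sub_cancel' hm.le, Nat.mod_self]
    rw [h0, if_pos rfl, one_mul]
    congr 2
    rw [Fin.val_mk, mul_one, Nat.mod_mod_of_dvd _ dvd_rfl]
  · intro b _ hb
    simp only [Qg, gCirc, Matrix.of_apply]
    rw [if_neg, zero_mul]
    intro h
    apply hb
    obtain ⟨c, hc⟩ := Nat.dvd_of_mod_eq_zero h
    have hb1 : b.val < n := b.isLt
    have hc2 : c < 2 := by
      by_contra hcge
      have h6 : n * 2 ≤ b.val + (n - i.val * g % n) :=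
        le_trans (Nat.mul_le_mul_left n (by omega)) hc.ge
      omega
    refine Fin.ext ?_
    simp only [Fin.val_mk]
    interval_cases c <;> omega
  · intro h; exact absurd (Finset.mem_univ _) h

open Complex Polynomial in
lemma det_gCirc_one {n : ℕ} (hn : 0 < n) (w : ℕ → ℂ) {ζ : ℂ}
    (hζ : IsPrimitiveRoot ζ n) :
    (gCirc n 1 w).det
      = ∏ k : Fin n, ∑ m ∈ Finset.range n, w m * ζ^(m*k.val) := by
  haveI : NeZero n := ⟨hn.ne'⟩
  set F : Matrix (Fin n) (Fin n) ℂ := Matrix.of fun i k => ζ^(i.val*k.val) with hF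
  have hpowmod : ∀ x : ℕ, ζ^(x % n) = ζ^x := fun x => by
    conv_rhs => rw [← Nat.div_add_mod x n]
    rw [pow_add, pow_mul, hζ.pow_eq_one, one_pow, one_mul]
  have key : gCirc n 1 w * F
      = F * Matrix.diagonal (fun k : Fin n => ∑ m ∈ Finset.range n, w m * ζ^(m*k.val)) := by
    ext i k
    rw [Matrix.mul_diagonal, Matrix.mul_apply]
    rw [← Equiv.sum_comp (Equiv.addLeft i) (fun j => gCirc n 1 w i j * F j k)]
    have hterm : ∀ m : Fin n,
        gCirc n 1 w i (Equiv.addLeft i m) * F (Equiv.addLeft i m) k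
          = ζ^(i.val*k.val) * (w m.val * ζ^(m.val*k.val)) := by
      intro m
      have h2 : ((i + m : Fin n)).val = (i.val + m.val) % n := Fin.val_add _ _
      have h1 : i.val * 1 % n = i.val := by rw [mul_one, Nat.mod_eq_of_lt i.isLt]
      have harg : ((i + m : Fin n)).val + (n - i.val * 1 % n) = (i.val + m.val) % n + (n - i.val) := by
        rw [h2, h1]
      have hidx : (((i + m : Fin n)).val + (n - i.val * 1 % n)) % n = m.val := by
        rw [harg, Nat.mod_add_mod]
        have : i.val + m.val + (n - i.val) = m.val + n := by
          have := i.isLt; omega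
        rw [this, Nat.add_mod_right, Nat.mod_eq_of_lt m.isLt]
      have hpow : ζ^(((i + m : Fin n)).val * k.val) = ζ^(i.val*k.val) * ζ^(m.val*k.val) := by
        rw [h2, pow_mul, hpowmod, ← pow_mul, add_mul, pow_add]
      show w ((((i + m : Fin n)).val + (n - i.val * 1 % n)) % n) * ζ^(((i + m : Fin n)).val * k.val) = _
      rw [hidx, hpow]; ring
    rw [Finset.sum_congr rfl (fun m _ => hterm m), ← Finset.mul_sum,
      Fin.sum_univ_eq_sum_range (fun m => w m * ζ^(m*k.val))]
    rfl
  have hFv : F = Matrix.vandermonde (fun i : Fin n => ζ^(i.val)) := by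
    ext i j
    simp [hF, Matrix.vandermonde, ← pow_mul]
  have hFne : F.det ≠ 0 := by
    rw [hFv, Matrix.det_vandermonde]
    rw [Finset.prod_ne_zero_iff]
    intro i _
    rw [Finset.prod_ne_zero_iff]
    intro j hj
    have hij : i < j := Finset.mem_Ioi.mp hj
    refine sub_ne_zero_of_ne fun heq => ?_
    exact absurd (Fin.ext (hζ.pow_inj j.isLt i.isLt heq)) hij.ne'
  have hdet := congrArg Matrix.det key
  rw [Matrix.det_mul, Matrix.det_mul, Matrix.det_diagonal, mul_comm F.det] at hdet
  exact mul_right_cancel₀ hFne hdet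

open Polynomial in
lemma prod_lin {n : ℕ} (hn : 0 < n) {ζ : ℂ} (hζ : IsPrimitiveRoot ζ n) (x : ℂ) :
    ∏ k ∈ Finset.range n, (x - ζ^k) = x^n - 1 := by
  have h := X_pow_sub_C_eq_prod hζ hn (one_pow n)
  have h2 := congrArg (Polynomial.eval x) h
  simp [Polynomial.eval_prod] at h2
  exact h2.symm

lemma prod_AB {n : ℕ} (hn : 0 < n) {ζ : ℂ} (hζ : IsPrimitiveRoot ζ n)
    (A B : ℂ) (hB : B ≠ 0) :
    ∏ k ∈ Finset.range n, (A - B * ζ^k) = A^n - B^n := by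
  have h1 : ∀ k ∈ Finset.range n, A - B * ζ^k = B * (A/B - ζ^k) := by
    intro k _
    field_simp
  rw [Finset.prod_congr rfl h1, Finset.prod_mul_distrib, Finset.prod_const,
    prod_lin hn hζ]
  rw [Finset.card_range]
  rw [div_pow, mul_sub, mul_one, mul_div_assoc', mul_div_cancel_left₀ _ (pow_ne_zero n hB)]

lemma prod_q {n : ℕ} (hn : 0 < n) {ζ : ℂ} (hζ : IsPrimitiveRoot ζ n) :
    ∏ k ∈ Finset.range n, (1 - 2*ζ^k - (ζ^k)^2)
      = (-1:ℂ)^n * ((((-1) + Real.sqrt 2 : ℝ):ℂ)^n - 1)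
          * ((((-1) - Real.sqrt 2 : ℝ):ℂ)^n - 1) := by
  set α : ℂ := (((-1) + Real.sqrt 2 : ℝ):ℂ) with hα
  set β : ℂ := (((-1) - Real.sqrt 2 : ℝ):ℂ) with hβ
  have h2c : ((Real.sqrt 2 : ℝ):ℂ)^2 = 2 := by
    norm_cast
    exact_mod_cast Real.sq_sqrt (by norm_num)
  have h1 : ∀ k ∈ Finset.range n, (1 - 2*ζ^k - (ζ^k)^2)
      = (-1) * ((α - ζ^k) * (β - ζ^k)) := by
    intro k _
    rw [hα, hβ]
    push_cast
    linear_combination -h2c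
  rw [Finset.prod_congr rfl h1, Finset.prod_mul_distrib, Finset.prod_const,
    Finset.prod_mul_distrib, prod_lin hn hζ, prod_lin hn hζ, Finset.card_range]
  ring

section
variable {R : Type*} [CommRing R] (p : ℕ → R)

lemma pell_sum_mul (h0 : p 0 = 0) (h1 : p 1 = 1)
    (hrec : ∀ m, p (m+2) = 2*p (m+1) + p m) (z : R) (n : ℕ) :
    (∑ k ∈ Finset.range n, p (k+1) * z^k) * (1 - 2*z - z^2)
      = 1 - p (n+1) * z^n - p n * z^(n+1) := by
  induction n with
  | zero => simp [h0, h1]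
  | succ n ih =>
    rw [Finset.sum_range_succ, add_mul]
    linear_combination ih + z^(n+1) * hrec n

lemma key_sum (h0 : p 0 = 0) (h1 : p 1 = 1)
    (hrec : ∀ m, p (m+2) = 2*p (m+1) + p m) (x y : R) :
    ∀ m, (∑ j ∈ Finset.range (m+1), p (j+1) * x^j * y^(m-j)) * (y^2 - 2*x*y - x^2)
      = y^(m+2) - p (m+2) * x^(m+1) * y - p (m+1) * x^(m+2) := by
  intro m
  induction m with
  | zero =>
    have h2 : p 2 = 2 := by rw [hrec 0, h0, h1]; ring
    simp [Finset.sum_range_one, h1, h2]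
  | succ m ih =>
    rw [Finset.sum_range_succ]
    have hsplit : (∑ j ∈ Finset.range (m+1), p (j+1) * x^j * y^(m+1-j))
        = y * ∑ j ∈ Finset.range (m+1), p (j+1) * x^j * y^(m-j) := by
      rw [Finset.mul_sum]
      refine Finset.sum_congr rfl fun j hj => ?_
      have hj' : j < m + 1 := Finset.mem_range.mp hj
      have : m + 1 - j = (m - j) + 1 := by omega
      rw [this, pow_succ]
      ring
    rw [hsplit]
    have h3 : m + 1 - (m+1) = 0 := by omega
    rw [h3]
    linear_combination y * ih + x^(m+2) * y * hrec (m+1)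

end

section
variable (P : ℕ → ℝ) (hP0 : P 0 = 0) (hP1 : P 1 = 1)
  (hrec : ∀ m : ℕ, P (m + 2) = 2 * P (m + 1) + P m)
include hP0 hP1 hrec

lemma pell_mono : ∀ m, 0 ≤ P m ∧ P m + 1 ≤ P (m+1) := by
  intro m
  induction m with
  | zero => rw [hP0, hP1]; norm_num
  | succ m ih =>
    have h2 := hrec m
    constructor
    · linarith [ih.1, ih.2]
    · rw [h2]; linarith [ih.1, ih.2]

lemma pell_quad' : ∀ m, P (m+1)^2 - 2 * P m * P (m+1) - P m ^2 = (-1)^m := by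
  intro m
  induction m with
  | zero => rw [hP0, hP1]; norm_num
  | succ m ih =>
    rw [hrec m, pow_succ]
    linear_combination (-1 : ℝ) * ih

lemma pell_binet' : ∀ m, (1 + Real.sqrt 2)^m = (P (m+1) - P m) + P m * Real.sqrt 2
    ∧ (1 - Real.sqrt 2)^m = (P (m+1) - P m) - P m * Real.sqrt 2 := by
  have h2 : Real.sqrt 2 ^ 2 = 2 := Real.sq_sqrt (by norm_num)
  intro m
  induction m with
  | zero => rw [hP0, hP1]; norm_num
  | succ m ih =>
    rw [pow_succ, pow_succ, ih.1, ih.2, hrec m]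
    constructor <;> linear_combination P m * h2

lemma d_real (n : ℕ) :
    ((-1) + Real.sqrt 2)^n * (((-1) - Real.sqrt 2)^n) * (-1:ℝ)^n
      - ((-1) + Real.sqrt 2)^n * (-1:ℝ)^n - ((-1) - Real.sqrt 2)^n * (-1:ℝ)^n + (-1:ℝ)^n
      = 1 + (-1:ℝ)^n - 2 * P (n+1) + 2 * P n := by
  have h2 : Real.sqrt 2 ^ 2 = 2 := Real.sq_sqrt (by norm_num)
  have hb := pell_binet' P hP0 hP1 hrec n
  have hq := pell_quad' P hP0 hP1 hrec n
  have q1 : ((-1) + Real.sqrt 2 : ℝ)^n = (-1:ℝ)^n * (1 - Real.sqrt 2)^n := by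
    rw [show ((-1) + Real.sqrt 2 : ℝ) = -(1 - Real.sqrt 2) by ring, neg_pow]
  have q2 : ((-1) - Real.sqrt 2 : ℝ)^n = (-1:ℝ)^n * (1 + Real.sqrt 2)^n := by
    rw [show ((-1) - Real.sqrt 2 : ℝ) = -(1 + Real.sqrt 2) by ring, neg_pow]
  have ht : ((-1:ℝ)^n) * ((-1:ℝ)^n) = 1 := by
    rw [← pow_add, ← two_mul, pow_mul]; norm_num
  rw [q1, q2, hb.1, hb.2]
  set t := (-1:ℝ)^n with hts
  linear_combination (t^2 + 1 - 2*(P (n+1) - P n)) * ht + t^3 * hq - t^3 * (P n)^2 * h2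

end

/-- Determinant of the g-circulant matrix of Pell numbers. -/
theorem det_gCirc_pell
    (P : ℕ → ℝ) (hP0 : P 0 = 0) (hP1 : P 1 = 1)
    (hrec : ∀ m : ℕ, P (m + 2) = 2 * P (m + 1) + P m)
    (n r : ℕ) (hn : 2 ≤ n) (hgcd : Nat.gcd n r = 1) :
    (gCirc n r (fun m => P (m + 1))).det =
      (Qg n r).det *
        ((1 - P (n + 1)) ^ (n - 1) +
          P n ^ (n - 2) *
            ∑ i ∈ Finset.Icc 1 (n - 1),
              P i * ((1 - P (n + 1)) / P n) ^ (i - 1)) := by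
  obtain ⟨k, rfl⟩ : ∃ k, n = k + 2 := ⟨n - 2, by omega⟩
  have hN0 : 0 < k + 2 := by omega
  simp only [show k + 2 + 1 = k + 3 from by omega, show k + 2 - 1 = k + 1 from by omega,
    show k + 2 - 2 = k from by omega]
  -- Pell facts
  have hmono := pell_mono P hP0 hP1 hrec
  have hge1 : ∀ m, 1 ≤ P (m+1) := by
    intro m
    induction m with
    | zero => rw [hP1]
    | succ m ih => have := (hmono (m+1)).2; linarith
  have hPn2 : (2:ℝ) ≤ P (k+2) := by have := (hmono (k+1)).2; have := hge1 k; linarith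
  have hb : P (k+2) ≠ 0 := by intro h; rw [h] at hPn2; norm_num at hPn2
  set a : ℝ := 1 - P (k+3) with ha
  set d : ℝ := 1 + (-1:ℝ)^(k+2) - 2 * P (k+3) + 2 * P (k+2) with hd
  have hrec1 : P (k+3) = 2 * P (k+2) + P (k+1) := by
    have := hrec (k+1); simpa [show k + 1 + 2 = k + 3 from by omega,
      show k + 1 + 1 = k + 2 from by omega] using this
  have hdneg : d < 0 := by
    have h4 := hge1 k
    have ht : (-1:ℝ)^(k+2) ≤ 1 := by
      rcases neg_one_pow_eq_or ℝ (k+2) with h | h <;> rw [h] <;> norm_num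
    rw [hd, hrec1]
    linarith
  have hdne : d ≠ 0 := ne_of_lt hdneg
  have hq : P (k+3)^2 - 2 * P (k+2) * P (k+3) - P (k+2)^2 = (-1:ℝ)^(k+2) := by
    have := pell_quad' P hP0 hP1 hrec (k+2)
    simpa [show k + 2 + 1 = k + 3 from by omega] using this
  -- decomposition
  rw [gCirc_decomp _ r hN0, Matrix.det_mul]
  congr 1
  -- complex spectral computation
  obtain ⟨ζ, hζ⟩ : ∃ ζ : ℂ, IsPrimitiveRoot ζ (k+2) :=
    ⟨_, Complex.isPrimitiveRoot_exp (k+2) (by omega)⟩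
  have hdetc : ((gCirc (k+2) 1 (fun m => P (m + 1))).det : ℂ)
      = ∏ c ∈ Finset.range (k+2), ∑ m ∈ Finset.range (k+2), ((P (m+1) : ℝ):ℂ) * (ζ^c)^m := by
    have hmap : Complex.ofRealHom.mapMatrix (gCirc (k+2) 1 (fun m => P (m + 1)))
        = gCirc (k+2) 1 (fun m => ((P (m+1) : ℝ):ℂ)) := rfl
    have hmd := RingHom.map_det Complex.ofRealHom (gCirc (k+2) 1 (fun m => P (m + 1)))
    rw [Complex.ofRealHom_eq_coe] at hmd
    rw [hmd, hmap, det_gCirc_one hN0 _ hζ,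
      Fin.prod_univ_eq_prod_range (fun c => ∑ m ∈ Finset.range (k+2), ((P (m+1) : ℝ):ℂ) * ζ^(m*c))]
    refine Finset.prod_congr rfl fun c _ => Finset.sum_congr rfl fun m _ => ?_
    rw [mul_comm m c, pow_mul]
  -- per-factor identity
  have hfq : ∀ c ∈ Finset.range (k+2),
      (∑ m ∈ Finset.range (k+2), ((P (m+1) : ℝ):ℂ) * (ζ^c)^m) * (1 - 2*ζ^c - (ζ^c)^2)
        = ((a:ℝ):ℂ) - ((P (k+2):ℝ):ℂ) * ζ^c := by
    intro c _
    have hzn : (ζ^c)^(k+2) = 1 := by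
      rw [← pow_mul, mul_comm, pow_mul, hζ.pow_eq_one, one_pow]
    have := pell_sum_mul (fun m => ((P m : ℝ):ℂ))
      (show ((P 0 : ℝ):ℂ) = 0 by rw [hP0]; norm_num)
      (show ((P 1 : ℝ):ℂ) = 1 by rw [hP1]; norm_num)
      (fun m => show ((P (m+2) : ℝ):ℂ) = 2 * ((P (m+1):ℝ):ℂ) + ((P m:ℝ):ℂ) by
        rw [hrec m]; push_cast; ring) (ζ^c) (k+2)
    rw [show k + 2 + 1 = k + 3 from by omega] at this
    rw [this, hzn, pow_succ, hzn, one_mul, ha]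
    push_cast
    ring
  -- the product of quadratic factors equals d
  have hprodq : ∏ c ∈ Finset.range (k+2), (1 - 2*ζ^c - (ζ^c)^2) = ((d:ℝ):ℂ) := by
    rw [prod_q hN0 hζ]
    have hdr := d_real P hP0 hP1 hrec (k+2)
    rw [show k + 2 + 1 = k + 3 from by omega] at hdr
    have := congrArg (fun x : ℝ => (x : ℂ)) hdr
    push_cast at this ⊢
    rw [hd]
    push_cast
    linear_combination this
  -- main complex identity
  have hmain : ((gCirc (k+2) 1 (fun m => P (m + 1))).det : ℂ) * ((d:ℝ):ℂ)
      = ((a:ℝ):ℂ)^(k+2) - ((P (k+2):ℝ):ℂ)^(k+2) := by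
    rw [hdetc, ← hprodq, ← Finset.prod_mul_distrib, Finset.prod_congr rfl hfq,
      prod_AB hN0 hζ _ _ (by exact_mod_cast hb)]
  have hreal : (gCirc (k+2) 1 (fun m => P (m + 1))).det * d
      = a^(k+2) - P (k+2)^(k+2) := by
    have : (((gCirc (k+2) 1 (fun m => P (m + 1))).det * d : ℝ) : ℂ)
        = ((a^(k+2) - P (k+2)^(k+2) : ℝ) : ℂ) := by
      push_cast
      push_cast at hmain
      linear_combination hmain
    exact_mod_cast this
  -- now the real algebra
  apply mul_right_cancel₀ hdne
  rw [hreal]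
  -- rewrite the Icc sum
  have hIcc : ∑ i ∈ Finset.Icc 1 (k+1), P i * (a / P (k+2)) ^ (i-1)
      = ∑ j ∈ Finset.range (k+1), P (j+1) * (a / P (k+2)) ^ j := by
    rw [← Finset.Ico_add_one_right_eq_Icc, Finset.sum_Ico_eq_sum_range]
    refine Finset.sum_congr (by norm_num) fun j _ => ?_
    rw [Nat.add_comm 1 j, Nat.add_sub_cancel]
  rw [hIcc]
  have hbk : P (k+2)^k * ∑ j ∈ Finset.range (k+1), P (j+1) * (a / P (k+2)) ^ j
      = ∑ j ∈ Finset.range (k+1), P (j+1) * a^j * P (k+2)^(k-j) := by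
    rw [Finset.mul_sum]
    refine Finset.sum_congr rfl fun j hj => ?_
    have hj' : j < k + 1 := Finset.mem_range.mp hj
    have hsplit : P (k+2)^k = P (k+2)^(k-j) * P (k+2)^j := by
      rw [← pow_add]; congr 1; omega
    rw [div_pow, hsplit]
    have hbj : P (k+2)^j ≠ 0 := pow_ne_zero _ hb
    field_simp
  rw [hbk]
  have hkey := key_sum P hP0 hP1 hrec a (P (k+2)) k
  have hd2 : P (k+2)^2 - 2*a*P (k+2) - a^2 = -d := by
    rw [ha, hd]
    linear_combination -hq
  have hd3 : d + P (k+2)^2 + P (k+1) * a = a := by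
    rw [ha, hd]
    linear_combination (-1) * hq + (P (k+3) - 1) * hrec1
  linear_combination hkey
    - (∑ j ∈ Finset.range (k+1), P (j+1) * a^j * P (k+2)^(k-j)) * hd2
    - a^(k+1) * hd3
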